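/- Let A be a finite-dimensional unital associative F-algebra and let e be a primitive idempotent of A (e² = e ≠ 0 and e cannot be written as f + g with f, g nonzero idempotents satisfying f g = g f = 0). Let I be the two-sided ideal of A generated by all commutators [p, a] with p an idempotent of A and a ∈ A. If the quotient A-module Ae/Ie is nonzero and zero action determined, then dim_F (Ae/Ie) = 1. -/

import Mathlib

/-- A unital left `A`-module `V` (with compatible `F`-vector space structure) is
*zero action determined* (zad) if every `F`-bilinear map `f : A × V → F` vanishing on
pairs with zero action is of the form `f(x, v) = Φ(x • v)` for some linear `Φ`. -/
def IsZad (F A V : Type*) [Field F] [Ring A] [Algebra F A]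
    [AddCommGroup V] [Module F V] [Module A V] [IsScalarTower F A V] : Prop :=
  ∀ f : A →ₗ[F] V →ₗ[F] F,
    (∀ (a : A) (m : V), a • m = 0 → f a m = 0) →
    ∃ Φ : V →ₗ[F] F, ∀ (x : A) (v : V), f x v = Φ (x • v)
section Helpers

variable {F : Type*} [Field F]

theorem myExistsDual {V : Type*} [AddCommGroup V] [Module F V] (v : V) (hv : v ≠ 0) :
    ∃ φ : V →ₗ[F] F, φ v = 1 := by
  have h : ¬ ∀ φ : Module.Dual F V, φ v = 0 := by
    simpa [Module.forall_dual_apply_eq_zero_iff] using hv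
  push_neg at h
  obtain ⟨φ, hφ⟩ := h
  exact ⟨(φ v)⁻¹ • φ, by simp [inv_mul_cancel₀ hφ]⟩

theorem myExistsDual' {V : Type*} [AddCommGroup V] [Module F V] (W : Submodule F V) (v : V)
    (hv : v ∉ W) : ∃ φ : V →ₗ[F] F, (∀ w ∈ W, φ w = 0) ∧ φ v = 1 := by
  have hv' : W.mkQ v ≠ 0 := by
    intro h0
    rw [Submodule.mkQ_apply, Submodule.Quotient.mk_eq_zero] at h0
    exact hv h0
  obtain ⟨ψ, hψ⟩ := myExistsDual (F := F) _ hv'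
  refine ⟨ψ.comp W.mkQ, fun w hw => ?_, hψ⟩
  have hw0 : W.mkQ w = 0 := by
    rw [Submodule.mkQ_apply, Submodule.Quotient.mk_eq_zero]; exact hw
  simp [LinearMap.comp_apply, hw0]

theorem myEndCancel {V : Type*} [AddCommGroup V] [Module F V] [FiniteDimensional F V]
    (τ ψ : Module.End F V) (h : τ * ψ = 1) : ψ * τ = 1 := by
  have hsurj : Function.Surjective τ := fun v =>
    ⟨ψ v, by simpa [Module.End.mul_apply] using LinearMap.congr_fun h v⟩
  have hinj : Function.Injective τ := (LinearMap.injective_iff_surjective).mpr hsurj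
  ext v
  apply hinj
  have h1 : τ (ψ (τ v)) = τ v := by
    simpa [Module.End.mul_apply] using LinearMap.congr_fun h (τ v)
  simpa [Module.End.mul_apply] using h1

variable {A V : Type*} [Ring A] [Algebra F A] [AddCommGroup V] [Module F V] [Module A V]
  [IsScalarTower F A V]

/-- The action of `A` on `V` as an `F`-linear map into `F`-linear endomorphisms. -/
def rhoFun (F : Type*) {A V : Type*} [Field F] [Ring A] [Algebra F A] [AddCommGroup V]
    [Module F V] [Module A V] [IsScalarTower F A V] : A →ₗ[F] Module.End F V where
  toFun a :=
    { toFun := fun v => a • v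
      map_add' := fun x y => smul_add a x y
      map_smul' := fun c v => by
        simp only [RingHom.id_apply]
        calc a • c • v = a • (c • (1 : A)) • v := by rw [smul_assoc, one_smul]
        _ = (a * (c • (1 : A))) • v := by rw [mul_smul]
        _ = ((c • (1 : A)) * a) • v := by
              have hcomm : a * (c • (1 : A)) = (c • (1 : A)) * a := by
                rw [← Algebra.algebraMap_eq_smul_one]
                exact (Algebra.commutes c a).symm
              rw [hcomm]
        _ = (c • a) • v := by rw [smul_mul_assoc, one_mul]
        _ = c • a • v := by rw [smul_assoc] }
  map_add' a b := LinearMap.ext fun v => add_smul a b v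
  map_smul' c a := LinearMap.ext fun v => by
    simp only [LinearMap.coe_mk, AddHom.coe_mk, RingHom.id_apply, LinearMap.smul_apply]
    rw [smul_assoc]

@[simp] theorem rhoFun_apply (a : A) (v : V) : rhoFun F a v = a • v := rfl

theorem rhoFun_mul (a b : A) : rhoFun F (a * b) = (rhoFun F a * rhoFun F b : Module.End F V) :=
  LinearMap.ext fun v => mul_smul a b v

theorem rhoFun_one : (rhoFun F (1 : A) : Module.End F V) = 1 :=
  LinearMap.ext fun v => one_smul A v

end Helpers


theorem corner_dichotomy {F A : Type*} [Field F] [Ring A] [Algebra F A] [FiniteDimensional F A]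
    (e : A) (he : IsIdempotentElem e)
    (hprim : ¬ ∃ f g : A, IsIdempotentElem f ∧ IsIdempotentElem g ∧ f ≠ 0 ∧ g ≠ 0 ∧
      f * g = 0 ∧ g * f = 0 ∧ e = f + g)
    (a : A) (ha : e * a * e = a) :
    (∃ b : A, e * b * e = b ∧ a * b = e ∧ b * a = e) ∨
    (∃ b : A, e * b * e = b ∧ (e - a) * b = e ∧ b * (e - a) = e) := by
  have hee : e * e = e := he
  -- the corner subspace eAe
  set φ : A →ₗ[F] A := (LinearMap.mulRight F e).comp (LinearMap.mulLeft F e) with hφ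
  have hφ_apply : ∀ x : A, φ x = e * x * e := fun x => rfl
  set Rsub : Submodule F A := LinearMap.range φ with hRsub
  have hmem : ∀ x : A, x ∈ Rsub ↔ e * x * e = x := by
    intro x
    constructor
    · rintro ⟨y, rfl⟩
      rw [hφ_apply]
      calc e * (e * y * e) * e = (e * e) * y * (e * e) := by noncomm_ring
        _ = e * y * e := by rw [hee]
    · intro h; exact ⟨x, h⟩
  have hleft : ∀ x ∈ Rsub, e * x = x := by
    intro x hx
    rw [hmem] at hx
    conv_lhs => rw [← hx]
    calc e * (e * x * e) = (e * e) * x * e := by noncomm_ring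
      _ = e * x * e := by rw [hee]
      _ = x := hx
  have hright : ∀ x ∈ Rsub, x * e = x := by
    intro x hx
    rw [hmem] at hx
    conv_lhs => rw [← hx]
    calc (e * x * e) * e = e * x * (e * e) := by noncomm_ring
      _ = e * x * e := by rw [hee]
      _ = x := hx
  have hmul : ∀ x ∈ Rsub, ∀ y ∈ Rsub, x * y ∈ Rsub := by
    intro x hx y hy
    rw [hmem]
    calc e * (x * y) * e = (e * x) * (y * e) := by noncomm_ring
      _ = x * y := by rw [hleft x hx, hright y hy]
  have haR : a ∈ Rsub := (hmem a).mpr ha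
  have hea : e * a = a := hleft a haR
  have hae : a * e = a := hright a haR
  have heR : e ∈ Rsub := (hmem e).mpr (by rw [hee, hee])
  -- left multiplication by a on the corner
  have hmaps : ∀ x ∈ Rsub, (LinearMap.mulLeft F a) x ∈ Rsub := by
    intro x hx
    simpa [LinearMap.mulLeft_apply] using hmul a haR x hx
  set L : Rsub →ₗ[F] Rsub := (LinearMap.mulLeft F a).restrict hmaps with hL
  have hLval : ∀ x : Rsub, ((L x : A)) = a * (x : A) := fun x => rfl
  have hLpow : ∀ (n : ℕ) (x : Rsub), (((L ^ n) x : A)) = a ^ n * (x : A) := by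
    intro n
    induction n with
    | zero => intro x; simp
    | succ n ih =>
      intro x
      rw [pow_succ, Module.End.mul_apply, ih (L x), hLval, pow_succ, mul_assoc]
  -- Fitting decomposition
  obtain ⟨N, hN⟩ := Filter.eventually_atTop.mp (LinearMap.eventually_isCompl_ker_pow_range_pow L)
  set n : ℕ := max N 1 with hn
  have hcompl : IsCompl (LinearMap.ker (L ^ n)) (LinearMap.range (L ^ n)) :=
    hN n (le_max_left _ _)
  obtain ⟨m, hm⟩ : ∃ m : ℕ, n = m + 1 := ⟨n - 1, by omega⟩
  obtain ⟨u, w, hu, hw, huw⟩ :=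
    Submodule.codisjoint_iff_exists_add_eq.mp hcompl.codisjoint (⟨e, heR⟩ : Rsub)
  -- uniqueness of decompositions
  have hkerval : ∀ x : Rsub, x ∈ LinearMap.ker (L ^ n) ↔ a ^ n * (x : A) = 0 := by
    intro x
    rw [LinearMap.mem_ker]
    constructor
    · intro h; rw [← hLpow n x, h]; rfl
    · intro h; ext; rw [hLpow n x, h]; rfl
  have hdecomp : ∀ x : Rsub, x ∈ LinearMap.ker (L ^ n) →
      (u : A) * (x : A) = (x : A) ∧ (w : A) * (x : A) = 0 := by
    intro x hx
    have hxR := x.2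
    have hux : (u : A) * (x : A) ∈ Rsub := hmul _ u.2 _ hxR
    have hwx : (w : A) * (x : A) ∈ Rsub := hmul _ w.2 _ hxR
    have hsum : (⟨(u : A) * x, hux⟩ : Rsub) + ⟨(w : A) * x, hwx⟩ = x := by
      ext
      push_cast
      calc (u : A) * x + (w : A) * x = ((u : A) + (w : A)) * x := by rw [add_mul]
        _ = e * x := by rw [show (u : A) + (w : A) = e from congrArg Subtype.val huw]
        _ = x := hleft _ hxR
    have huk : (⟨(u : A) * x, hux⟩ : Rsub) ∈ LinearMap.ker (L ^ n) := by
      rw [hkerval]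
      calc a ^ n * ((u : A) * x) = (a ^ n * u) * x := by rw [mul_assoc]
        _ = 0 := by rw [(hkerval u).mp hu, zero_mul]
    have hwr : (⟨(w : A) * x, hwx⟩ : Rsub) ∈ LinearMap.range (L ^ n) := by
      obtain ⟨z, hz⟩ := hw
      have hz' : a ^ n * (z : A) = (w : A) := by rw [← hLpow n z, hz]
      have hzx : (z : A) * (x : A) ∈ Rsub := hmul _ z.2 _ hxR
      refine ⟨⟨(z : A) * x, hzx⟩, ?_⟩
      ext
      rw [hLpow]
      push_cast
      rw [← mul_assoc, hz']
    -- difference lies in ker ⊓ range = ⊥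
    have hpq : (⟨(u : A) * x, hux⟩ : Rsub) - x = -(⟨(w : A) * x, hwx⟩ : Rsub) := by
      apply eq_neg_of_add_eq_zero_left
      rw [sub_add_eq_add_sub, hsum, sub_self]
    have hdiff : (⟨(u : A) * x, hux⟩ : Rsub) - x ∈ LinearMap.ker (L ^ n) ⊓ LinearMap.range (L ^ n) := by
      constructor
      · exact Submodule.sub_mem _ huk hx
      · rw [hpq]
        exact Submodule.neg_mem _ hwr
    rw [hcompl.inf_eq_bot, Submodule.mem_bot, sub_eq_zero] at hdiff
    have h1 : (u : A) * (x : A) = (x : A) := congrArg Subtype.val hdiff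
    refine ⟨h1, ?_⟩
    have hvv := congrArg Subtype.val hsum
    push_cast at hvv
    rw [h1] at hvv
    have h2 : (x : A) + (w : A) * (x : A) = (x : A) + 0 := by rw [add_zero]; exact hvv
    exact add_left_cancel h2
  have hdecomp' : ∀ x : Rsub, x ∈ LinearMap.range (L ^ n) →
      (u : A) * (x : A) = 0 ∧ (w : A) * (x : A) = (x : A) := by
    intro x hx
    have hxR := x.2
    have hux : (u : A) * (x : A) ∈ Rsub := hmul _ u.2 _ hxR
    have hwx : (w : A) * (x : A) ∈ Rsub := hmul _ w.2 _ hxR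
    have hsum : (⟨(u : A) * x, hux⟩ : Rsub) + ⟨(w : A) * x, hwx⟩ = x := by
      ext
      push_cast
      calc (u : A) * x + (w : A) * x = ((u : A) + (w : A)) * x := by rw [add_mul]
        _ = e * x := by rw [show (u : A) + (w : A) = e from congrArg Subtype.val huw]
        _ = x := hleft _ hxR
    have huk : (⟨(u : A) * x, hux⟩ : Rsub) ∈ LinearMap.ker (L ^ n) := by
      rw [hkerval]
      calc a ^ n * ((u : A) * x) = (a ^ n * u) * x := by rw [mul_assoc]
        _ = 0 := by rw [(hkerval u).mp hu, zero_mul]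
    have hwr : (⟨(w : A) * x, hwx⟩ : Rsub) ∈ LinearMap.range (L ^ n) := by
      obtain ⟨z, hz⟩ := hw
      have hz' : a ^ n * (z : A) = (w : A) := by rw [← hLpow n z, hz]
      have hzx : (z : A) * (x : A) ∈ Rsub := hmul _ z.2 _ hxR
      refine ⟨⟨(z : A) * x, hzx⟩, ?_⟩
      ext
      rw [hLpow]
      push_cast
      rw [← mul_assoc, hz']
    have hdiff : (⟨(u : A) * x, hux⟩ : Rsub) ∈ LinearMap.ker (L ^ n) ⊓ LinearMap.range (L ^ n) := by
      constructor
      · exact huk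
      · rw [eq_sub_of_add_eq hsum]
        exact Submodule.sub_mem _ hx hwr
    rw [hcompl.inf_eq_bot, Submodule.mem_bot] at hdiff
    have h1 : (u : A) * (x : A) = 0 := congrArg Subtype.val hdiff
    refine ⟨h1, ?_⟩
    have hvv := congrArg Subtype.val hsum
    push_cast at hvv
    rw [h1, zero_add] at hvv
    exact hvv
  have hu2 := hdecomp u hu
  have hw2 := hdecomp' w hw
  have heuw : e = (u : A) + (w : A) := (congrArg Subtype.val huw).symm
  have hzero : (u : A) = 0 ∨ (w : A) = 0 := by
    by_contra hcon
    push_neg at hcon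
    exact hprim ⟨u, w, hu2.1, hw2.2, hcon.1, hcon.2, hw2.1, hu2.2, heuw⟩
  rcases hzero with hu0 | hw0
  · -- e is in the range: a is invertible in the corner
    left
    have hew : (w : A) = e := by rw [heuw, hu0, zero_add]
    obtain ⟨z, hz⟩ := hw
    have hz' : a ^ n * (z : A) = e := by rw [← hLpow n z, hz, hew]
    -- right inverse
    set b : A := e * (a ^ m * (z : A)) * e with hb
    have hbR : e * b * e = b := by
      rw [hb]
      calc e * (e * (a ^ m * (z:A)) * e) * e = (e*e) * (a ^ m * (z:A)) * (e*e) := by noncomm_ring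
        _ = e * (a ^ m * (z:A)) * e := by rw [hee]
    have hab : a * b = e := by
      rw [hb]
      calc a * (e * (a ^ m * (z:A)) * e) = (a * e) * (a ^ m * (z:A)) * e := by noncomm_ring
        _ = (a * a ^ m * (z:A)) * e := by rw [hae]; noncomm_ring
        _ = (a ^ n * (z:A)) * e := by rw [← pow_succ', ← hm]
        _ = e := by rw [hz', hee]
    -- L is surjective hence injective
    have hLsurj : Function.Surjective L := by
      intro y
      have hyR := y.2
      have hpre : e * (a ^ m * (z : A) * (y : A)) * e ∈ Rsub := ⟨_, rfl⟩
      refine ⟨⟨e * (a ^ m * (z : A) * (y : A)) * e, hpre⟩, ?_⟩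
      ext
      rw [hLval]
      push_cast
      calc a * (e * (a ^ m * (z:A) * (y:A)) * e)
          = (a * e) * (a ^ m * (z:A) * (y:A)) * e := by noncomm_ring
        _ = (a * a ^ m) * (z:A) * (y:A) * e := by rw [hae]; noncomm_ring
        _ = (a ^ n * (z:A)) * ((y:A) * e) := by rw [← pow_succ', ← hm]; noncomm_ring
        _ = e * (y : A) := by rw [hz', hright _ hyR]
        _ = (y : A) := hleft _ hyR
    have hLinj : Function.Injective L := (LinearMap.injective_iff_surjective).mpr hLsurj
    have hba : b * a = e := by
      have hbaR : b * a - e ∈ Rsub := Submodule.sub_mem _ (hmul b ((hmem b).mpr hbR) a haR) heR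
      have hL0 : L ⟨b * a - e, hbaR⟩ = 0 := by
        ext
        rw [hLval]
        push_cast
        calc a * ((b * a : A) - e) = (a * b) * a - a * e := by noncomm_ring
          _ = 0 := by rw [hab, hae, hea, sub_self]
      have hinj0 := hLinj (hL0.trans (map_zero L).symm)
      have hv := congrArg Subtype.val hinj0
      simpa [sub_eq_zero] using hv
    exact ⟨b, hbR, hab, hba⟩
  · -- e is in the kernel: a is nilpotent
    right
    have heu : (u : A) = e := by rw [heuw, hw0, add_zero]
    have hnil : a ^ n = 0 := by
      have := (hkerval u).mp hu
      rw [heu] at this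
      have hane : a ^ n * e = a ^ n := by
        rw [hm, pow_succ, mul_assoc, hae]
      rw [hane] at this
      exact this
    obtain ⟨v, hv⟩ := (IsNilpotent.isUnit_one_sub ⟨n, hnil⟩ : IsUnit (1 - a))
    set s : A := ((v⁻¹ : Aˣ) : A) with hs
    have hs1 : (1 - a) * s = 1 := by rw [← hv, hs]; exact v.mul_inv
    have hs2 : s * (1 - a) = 1 := by rw [← hv, hs]; exact v.inv_mul
    set b : A := e * s * e with hb
    have hbR : e * b * e = b := by
      rw [hb]
      calc e * (e * s * e) * e = (e*e) * s * (e*e) := by noncomm_ring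
        _ = e * s * e := by rw [hee]
    have he1a : e * (1 - a) = e - a := by rw [mul_sub, mul_one, hea]
    have h1ae : (1 - a) * e = e - a := by rw [sub_mul, one_mul, hae]
    refine ⟨b, hbR, ?_, ?_⟩
    · calc (e - a) * b = (e * (1 - a)) * (e * s * e) := by rw [he1a, hb]
        _ = e * ((1 - a) * e) * s * e := by noncomm_ring
        _ = e * (e * (1 - a)) * s * e := by rw [h1ae, he1a]
        _ = (e * e) * ((1 - a) * s) * e := by noncomm_ring
        _ = e := by rw [hee, hs1, mul_one, hee]
    · calc b * (e - a) = (e * s * e) * ((1 - a) * e) := by rw [h1ae, hb]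
        _ = e * s * ((e * (1 - a)) * e) := by noncomm_ring
        _ = e * s * (((1 - a) * e) * e) := by rw [h1ae, he1a]
        _ = e * (s * (1 - a)) * (e * e) := by noncomm_ring
        _ = e := by rw [hee, hs2, mul_one, hee]

theorem abstract_dim_one {F A V : Type*} [Field F] [Ring A] [Algebra F A]
    [AddCommGroup V] [Module F V] [Module A V] [IsScalarTower F A V]
    [FiniteDimensional F V] [Nontrivial V]
    (v₀ : V) (hcyc : ∀ v : V, ∃ x : A, x • v₀ = v)
    (hdich : ∀ a : A,
      (∃ b : A, (rhoFun F b : Module.End F V) * rhoFun F a = 1 ∧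
        (rhoFun F a : Module.End F V) * rhoFun F b = 1) ∨
      (∃ b : A, (rhoFun F b : Module.End F V) * (1 - rhoFun F a) = 1 ∧
        (1 - (rhoFun F a : Module.End F V)) * rhoFun F b = 1))
    (hzad : IsZad F A V) : Module.finrank F V = 1 := by
  classical
  set ρ : A →ₗ[F] Module.End F V := rhoFun F with hρ
  have hρ_apply : ∀ (a : A) (v : V), ρ a v = a • v := fun a v => rhoFun_apply a v
  have hρmul : ∀ a b : A, ρ (a * b) = ρ a * ρ b := fun a b => rhoFun_mul a b
  have hρone : ρ (1 : A) = 1 := rhoFun_one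
  have hv₀ : v₀ ≠ 0 := by
    intro h0
    obtain ⟨p, q, hpq⟩ := exists_pair_ne V
    have hall : ∀ v : V, v = 0 := by
      intro v
      obtain ⟨x, hx⟩ := hcyc v
      rw [← hx, h0, smul_zero]
    exact hpq ((hall p).trans (hall q).symm)
  have h01 : (0 : Module.End F V) ≠ 1 := by
    intro h
    obtain ⟨v, hv⟩ := exists_ne (0 : V)
    have := LinearMap.congr_fun h v
    simp only [LinearMap.zero_apply, Module.End.one_apply] at this
    exact hv this.symm
  set P : Module.End F V → Prop := fun τ => ∃ b : A, ρ b * τ = 1 ∧ τ * ρ b = 1 with hP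
  have hPnot0 : ¬ P 0 := by
    rintro ⟨b, hb1, -⟩
    rw [mul_zero] at hb1
    exact h01 hb1
  have hP_of_right : ∀ (τ : Module.End F V) (c : A), τ * ρ c = 1 → P τ := by
    intro τ c h
    exact ⟨c, myEndCancel τ (ρ c) h, h⟩
  have hdichP : ∀ a : A, P (ρ a) ∨ P (1 - ρ a) := by
    intro a
    rcases hdich a with ⟨b, hb1, hb2⟩ | ⟨b, hb1, hb2⟩
    · exact Or.inl ⟨b, hb1, hb2⟩
    · exact Or.inr ⟨b, hb1, hb2⟩
  -- the set of non-invertible elements of the image algebra is a submodule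
  set mSub : Submodule F (Module.End F V) :=
    { carrier := {τ | (∃ a : A, ρ a = τ) ∧ ¬ P τ}
      zero_mem' := ⟨⟨0, map_zero ρ⟩, hPnot0⟩
      add_mem' := by
        rintro τ σ ⟨⟨a, rfl⟩, hnτ⟩ ⟨⟨b, rfl⟩, hnσ⟩
        refine ⟨⟨a + b, map_add ρ a b⟩, ?_⟩
        rintro ⟨c, hc1, hc2⟩
        rcases hdichP (a * c) with ⟨k, hk1, hk2⟩ | ⟨k, hk1, hk2⟩
        · refine hnτ (hP_of_right (ρ a) (c * k) ?_)
          calc ρ a * ρ (c * k) = (ρ a * ρ c) * ρ k := by rw [hρmul, mul_assoc]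
            _ = ρ (a * c) * ρ k := by rw [hρmul]
            _ = 1 := hk2
        · refine hnσ (hP_of_right (ρ b) (c * k) ?_)
          have hadd : ρ a * ρ c + ρ b * ρ c = 1 := by rw [← add_mul]; exact hc2
          have hsub : ρ b * ρ c = 1 - ρ (a * c) := by
            rw [hρmul]; exact eq_sub_of_add_eq' hadd
          calc ρ b * ρ (c * k) = (ρ b * ρ c) * ρ k := by rw [hρmul, mul_assoc]
            _ = (1 - ρ (a * c)) * ρ k := by rw [hsub]
            _ = 1 := hk2
      smul_mem' := by
        rintro c τ ⟨⟨a, rfl⟩, hnτ⟩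
        refine ⟨⟨c • a, map_smul ρ c a⟩, ?_⟩
        rintro ⟨k, hk1, hk2⟩
        by_cases hc : c = 0
        · rw [hc, zero_smul, mul_zero] at hk1
          exact h01 hk1
        · refine hnτ ⟨c • k, ?_, ?_⟩
          · rw [map_smul]
            calc (c • ρ k) * ρ a = c • (ρ k * ρ a) := smul_mul_assoc c _ _
              _ = ρ k * (c • ρ a) := (mul_smul_comm c _ _).symm
              _ = 1 := hk1
          · rw [map_smul]
            calc ρ a * (c • ρ k) = c • (ρ a * ρ k) := mul_smul_comm c _ _
              _ = (c • ρ a) * ρ k := (smul_mul_assoc c _ _).symm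
              _ = 1 := hk2 } with hmS
  have hmS_mem : ∀ τ : Module.End F V, τ ∈ mSub ↔ ((∃ a : A, ρ a = τ) ∧ ¬ P τ) :=
    fun τ => Iff.rfl
  -- a zero action with a nonzero vector forces membership in mSub
  have hmem_of_smul : ∀ (a : A) (m : V), m ≠ 0 → a • m = 0 → ρ a ∈ mSub := by
    intro a m hm h0
    refine ⟨⟨a, rfl⟩, ?_⟩
    rintro ⟨b, hb1, -⟩
    apply hm
    have : (ρ b * ρ a) m = m := by rw [hb1]; rfl
    rw [Module.End.mul_apply, hρ_apply, hρ_apply, h0, smul_zero] at this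
    exact this.symm
  have h1P : P (1 : Module.End F V) := ⟨1, by rw [hρone, one_mul], by rw [hρone, one_mul]⟩
  have h1m : (1 : Module.End F V) ∉ mSub := fun h => h.2 h1P
  -- the span of zero-action values
  set Zset : Set V := {v | ∃ (a : A) (u : V), ρ a ∈ mSub ∧ v = a • u} with hZ
  set mV : Submodule F V := Submodule.span F Zset with hmV
  -- Case A is impossible: mV must be ⊥
  have hmVbot : mV = ⊥ := by
    by_contra hA
    obtain ⟨v', hv'mem, hv'ne⟩ := Submodule.exists_mem_ne_zero_of_ne_bot hA
    obtain ⟨η, hη⟩ := myExistsDual (F := F) v' hv'ne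
    obtain ⟨χ, hχ0, hχ1⟩ := myExistsDual' (F := F) mSub 1 h1m
    set f : A →ₗ[F] V →ₗ[F] F := (χ.comp ρ).smulRight η with hf
    have hf_apply : ∀ (a : A) (m : V), f a m = χ (ρ a) * η m := by
      intro a m; simp [hf, LinearMap.smulRight_apply, smul_eq_mul]
    have hvan : ∀ (a : A) (m : V), a • m = 0 → f a m = 0 := by
      intro a m h0
      by_cases hm : m = 0
      · rw [hf_apply, hm, map_zero, mul_zero]
      · rw [hf_apply, hχ0 _ (hmem_of_smul a m hm h0), zero_mul]
    obtain ⟨Φ, hΦ⟩ := hzad f hvan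
    have hΦη : ∀ v : V, Φ v = η v := by
      intro v
      have := hΦ 1 v
      rw [one_smul, hf_apply, hρone, hχ1, one_mul] at this
      exact this.symm
    have hZker : Zset ⊆ (LinearMap.ker Φ : Set V) := by
      rintro v ⟨a, u, ham, rfl⟩
      have := (hΦ a u).symm
      rw [hf_apply, hχ0 _ ham, zero_mul] at this
      simpa [LinearMap.mem_ker] using this
    have hΦ0 : Φ v' = 0 := by
      have : mV ≤ LinearMap.ker Φ := Submodule.span_le.mpr hZker
      exact this hv'mem
    rw [hΦη v', hη] at hΦ0
    exact one_ne_zero hΦ0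
  -- hence every non-invertible element of the image acts as zero
  have hkey : ∀ a : A, ρ a = 0 ∨ P (ρ a) := by
    intro a
    by_cases hPa : P (ρ a)
    · exact Or.inr hPa
    · left
      have ham : ρ a ∈ mSub := ⟨⟨a, rfl⟩, hPa⟩
      ext v
      have hZv : a • v ∈ Zset := ⟨a, v, ham, rfl⟩
      have : a • v ∈ mV := Submodule.subset_span hZv
      rw [hmVbot, Submodule.mem_bot] at this
      rw [hρ_apply, this, LinearMap.zero_apply]
  -- conclude the dimension count
  have hfr : 1 ≤ Module.finrank F V := Module.finrank_pos
  by_contra hne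
  have hge2 : 2 ≤ Module.finrank F V := by omega
  -- the image of ρ is isomorphic to V via evaluation at v₀
  set Tsub : Submodule F (Module.End F V) := LinearMap.range ρ with hT
  set ev : Tsub →ₗ[F] V :=
    { toFun := fun τ => (τ : Module.End F V) v₀
      map_add' := fun τ σ => by simp [LinearMap.add_apply]
      map_smul' := fun c τ => by simp [LinearMap.smul_apply] } with hev
  have hev_inj : Function.Injective ev := by
    rw [← LinearMap.ker_eq_bot]
    rw [Submodule.eq_bot_iff]
    rintro ⟨τ, a, rfl⟩ hτ
    have h0 : ρ a v₀ = 0 := hτ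
    rcases hkey a with h | ⟨b, hb1, -⟩
    · exact Subtype.ext h
    · exfalso
      apply hv₀
      have : (ρ b * ρ a) v₀ = v₀ := by rw [hb1]; rfl
      rw [Module.End.mul_apply, h0, map_zero] at this
      exact this.symm
  have hev_surj : Function.Surjective ev := by
    intro v
    obtain ⟨x, hx⟩ := hcyc v
    exact ⟨⟨ρ x, x, rfl⟩, by simpa [hev, hρ_apply] using hx⟩
  have hfrT : Module.finrank F Tsub = Module.finrank F V :=
    (LinearEquiv.ofBijective ev ⟨hev_inj, hev_surj⟩).finrank_eq
  -- find an element of the image not in the span of the identity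
  have hnotle : ¬ (Tsub ≤ Submodule.span F {(1 : Module.End F V)}) := by
    intro hle
    have h1 : Module.finrank F Tsub ≤
        Module.finrank F (Submodule.span F {(1 : Module.End F V)}) :=
      Submodule.finrank_mono hle
    rw [finrank_span_singleton (Ne.symm h01)] at h1
    omega
  obtain ⟨t₀, ht₀T, ht₀⟩ := SetLike.not_le_iff_exists.mp hnotle
  obtain ⟨a₀, ha₀⟩ := ht₀T
  have ht₀ne : t₀ ≠ 0 := fun h => ht₀ (h ▸ Submodule.zero_mem _)
  have hPt₀ : P t₀ := by
    rcases hkey a₀ with h | h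
    · exact absurd (ha₀ ▸ h) ht₀ne
    · exact ha₀ ▸ h
  have ht₀v₀ : t₀ v₀ ≠ 0 := by
    intro h0
    obtain ⟨b, hb1, -⟩ := hPt₀
    apply hv₀
    have : (ρ b * t₀) v₀ = v₀ := by rw [hb1]; rfl
    rw [Module.End.mul_apply, h0, map_zero] at this
    exact this.symm
  obtain ⟨η, hη⟩ := myExistsDual (F := F) (t₀ v₀) ht₀v₀
  have h1span : (1 : Module.End F V) ∉ Submodule.span F {t₀} := by
    intro hmem
    obtain ⟨c, hc⟩ := Submodule.mem_span_singleton.mp hmem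
    have hcne : c ≠ 0 := by
      intro h0; rw [h0, zero_smul] at hc; exact h01 hc
    apply ht₀
    rw [Submodule.mem_span_singleton]
    exact ⟨c⁻¹, by rw [← hc, smul_smul, inv_mul_cancel₀ hcne, one_smul]⟩
  obtain ⟨χ, hχ0, hχ1⟩ := myExistsDual' (F := F) (Submodule.span F {t₀}) 1 h1span
  set f : A →ₗ[F] V →ₗ[F] F := (χ.comp ρ).smulRight η with hf
  have hf_apply : ∀ (a : A) (m : V), f a m = χ (ρ a) * η m := by
    intro a m; simp [hf, LinearMap.smulRight_apply, smul_eq_mul]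
  have hvan : ∀ (a : A) (m : V), a • m = 0 → f a m = 0 := by
    intro a m h0
    rcases hkey a with h | ⟨b, hb1, -⟩
    · rw [hf_apply, h, map_zero, zero_mul]
    · have hm : m = 0 := by
        have : (ρ b * ρ a) m = m := by rw [hb1]; rfl
        rw [Module.End.mul_apply, hρ_apply, hρ_apply, h0, smul_zero] at this
        exact this.symm
      rw [hf_apply, hm, map_zero, mul_zero]
  obtain ⟨Φ, hΦ⟩ := hzad f hvan
  have hval0 : Φ (a₀ • v₀) = 0 := by
    rw [← hΦ a₀ v₀, hf_apply, ha₀,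
      hχ0 t₀ (Submodule.mem_span_singleton_self t₀), zero_mul]
  have hval1 : Φ (a₀ • v₀) = 1 := by
    have h1 := hΦ 1 (a₀ • v₀)
    rw [one_smul, hf_apply, hρone, hχ1, one_mul] at h1
    rw [← h1]
    have : a₀ • v₀ = t₀ v₀ := by rw [← ha₀, hρ_apply]
    rw [this, hη]
  rw [hval0] at hval1
  exact zero_ne_one hval1


/-- Claim 1 in the paper: if `e` is a primitive idempotent of a
finite-dimensional algebra `A` and the quotient module `Ae/Ie` is nonzero and zad,
then `dim_F (Ae/Ie) = 1`.  Here `I` is the two-sided ideal generated by all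
commutators of idempotents with arbitrary elements, `Ae = span_A {e}`, and `Ie` is the
submodule `{xe : x ∈ I}` of `Ae`. -/
theorem stmt_16 (F A : Type*) [Field F] [Ring A] [Algebra F A] [FiniteDimensional F A]
    (e : A) (he : IsIdempotentElem e) (hne : e ≠ 0)
    (hprim : ¬ ∃ f g : A, IsIdempotentElem f ∧ IsIdempotentElem g ∧ f ≠ 0 ∧ g ≠ 0 ∧
      f * g = 0 ∧ g * f = 0 ∧ e = f + g)
    (hnonzero : Nontrivial
      (↥(Ideal.span {e} : Ideal A) ⧸
        (Submodule.comap (Ideal.span {e} : Ideal A).subtype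
          (Submodule.map (LinearMap.toSpanSingleton A A e)
            (TwoSidedIdeal.span {c : A | ∃ p a : A, IsIdempotentElem p ∧ c = p * a - a * p}).asIdeal))))
    (hzad : IsZad F A
      (↥(Ideal.span {e} : Ideal A) ⧸
        (Submodule.comap (Ideal.span {e} : Ideal A).subtype
          (Submodule.map (LinearMap.toSpanSingleton A A e)
            (TwoSidedIdeal.span {c : A | ∃ p a : A, IsIdempotentElem p ∧ c = p * a - a * p}).asIdeal)))) :
    Module.finrank F
      (↥(Ideal.span {e} : Ideal A) ⧸
        (Submodule.comap (Ideal.span {e} : Ideal A).subtype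
          (Submodule.map (LinearMap.toSpanSingleton A A e)
            (TwoSidedIdeal.span {c : A | ∃ p a : A, IsIdempotentElem p ∧ c = p * a - a * p}).asIdeal))) = 1 := by
  classical
  set J : TwoSidedIdeal A :=
    TwoSidedIdeal.span {c : A | ∃ p a : A, IsIdempotentElem p ∧ c = p * a - a * p} with hJ
  set Msub : Ideal A := Ideal.span {e} with hM
  set Ssub : Submodule A ↥Msub := Submodule.comap Msub.subtype
      (Submodule.map (LinearMap.toSpanSingleton A A e) J.asIdeal) with hS
  have hee : e * e = e := he
  have heM : e ∈ Msub := Ideal.subset_span (Set.mem_singleton e)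
  -- finite dimensionality of the quotient module
  haveI hfdM : FiniteDimensional F ↥Msub :=
    FiniteDimensional.of_injective ((Msub.subtype).restrictScalars F)
      (Submodule.injective_subtype Msub)
  haveI hfdV : FiniteDimensional F (↥Msub ⧸ Ssub) :=
    Module.Finite.of_surjective ((Ssub.mkQ).restrictScalars F)
      (Submodule.mkQ_surjective Ssub)
  -- membership in Ssub
  have hSmem : ∀ x : ↥Msub, x ∈ Ssub ↔ ∃ c, c ∈ J ∧ c * e = (x : A) := by
    intro x
    simp only [hS, Submodule.mem_comap, Submodule.coe_subtype, Submodule.mem_map,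
      LinearMap.toSpanSingleton_apply, smul_eq_mul, TwoSidedIdeal.mem_asIdeal]
  have hmk_eq : ∀ (y z : A) (hy : y ∈ Msub) (hz : z ∈ Msub),
      (∃ c, c ∈ J ∧ c * e = y - z) →
      (Submodule.Quotient.mk (⟨y, hy⟩ : ↥Msub) : ↥Msub ⧸ Ssub)
        = Submodule.Quotient.mk ⟨z, hz⟩ := by
    intro y z hy hz hc
    rw [Submodule.Quotient.eq]
    exact (hSmem _).mpr hc
  -- generators of J
  have hgen : ∀ b : A, e * b - b * e ∈ J :=
    fun b => TwoSidedIdeal.subset_span ⟨e, b, he, rfl⟩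
  have hgen' : ∀ b : A, b * e - e * b ∈ J := by
    intro b
    have := J.neg_mem (hgen b)
    simpa [neg_sub] using this
  -- the key commutation fact: a acts like e*a*e
  have hact_mem : ∀ (a y : A), y ∈ Msub → ∃ c, c ∈ J ∧ c * e = a * y - e * a * e * y := by
    intro a y hy
    obtain ⟨r, hr⟩ := Submodule.mem_span_singleton.mp hy
    rw [smul_eq_mul] at hr
    have hye : y * e = y := by rw [← hr, mul_assoc, hee]
    have h1 : a * y - e * (a * y) ∈ J := by
      have h := hgen' (a * y)
      have heq : a * y * e - e * (a * y) = a * y - e * (a * y) := by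
        rw [mul_assoc, hye]
      rwa [heq] at h
    have h2 : (e * a) * (y - e * y) ∈ J := by
      apply J.mul_mem_left
      have h := hgen' y
      rwa [hye] at h
    have hsum := J.add_mem h1 h2
    have heq2 : a * y - e * (a * y) + (e * a) * (y - e * y) = a * y - e * a * e * y := by
      noncomm_ring
    rw [heq2] at hsum
    refine ⟨a * y - e * a * e * y, hsum, ?_⟩
    calc (a * y - e * a * e * y) * e = a * (y * e) - e * a * e * (y * e) := by noncomm_ring
      _ = a * y - e * a * e * y := by rw [hye]
  have hact : ∀ (a : A) (v : ↥Msub ⧸ Ssub), a • v = (e * a * e) • v := by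
    intro a v
    obtain ⟨⟨y, hy⟩, rfl⟩ := Submodule.Quotient.mk_surjective _ v
    rw [← Submodule.Quotient.mk_smul, ← Submodule.Quotient.mk_smul]
    have h1 : (a • (⟨y, hy⟩ : ↥Msub)) = ⟨a * y, Msub.mul_mem_left a hy⟩ :=
      Subtype.ext (by simp [smul_eq_mul])
    have h2 : ((e * a * e) • (⟨y, hy⟩ : ↥Msub)) = ⟨e * a * e * y, Msub.mul_mem_left _ hy⟩ :=
      Subtype.ext (by simp [smul_eq_mul])
    rw [h1, h2]
    exact hmk_eq _ _ _ _ (hact_mem a y hy)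
  have hid : ∀ v : ↥Msub ⧸ Ssub, e • v = v := by
    intro v
    have := hact 1 v
    rw [one_smul, mul_one, hee] at this
    exact this.symm
  -- cyclic generator
  set v₀ : ↥Msub ⧸ Ssub := Submodule.Quotient.mk ⟨e, heM⟩ with hv₀def
  have hcyc : ∀ v : ↥Msub ⧸ Ssub, ∃ x : A, x • v₀ = v := by
    intro v
    obtain ⟨⟨y, hy⟩, rfl⟩ := Submodule.Quotient.mk_surjective _ v
    obtain ⟨r, hr⟩ := Submodule.mem_span_singleton.mp hy
    refine ⟨r, ?_⟩
    rw [hv₀def, ← Submodule.Quotient.mk_smul]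
    congr 1
    exact Subtype.ext (by simpa [smul_eq_mul] using hr)
  -- dichotomy transported to the action
  have hdich : ∀ a : A,
      (∃ b : A, (rhoFun F b : Module.End F (↥Msub ⧸ Ssub)) * rhoFun F a = 1 ∧
        (rhoFun F a : Module.End F (↥Msub ⧸ Ssub)) * rhoFun F b = 1) ∨
      (∃ b : A, (rhoFun F b : Module.End F (↥Msub ⧸ Ssub)) * (1 - rhoFun F a) = 1 ∧
        (1 - (rhoFun F a : Module.End F (↥Msub ⧸ Ssub))) * rhoFun F b = 1) := by
    intro a
    have hrr : e * (e * a * e) * e = e * a * e := by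
      calc e * (e * a * e) * e = (e * e) * a * (e * e) := by noncomm_ring
        _ = e * a * e := by rw [hee]
    have hρae : (rhoFun F (e * a * e) : Module.End F (↥Msub ⧸ Ssub)) = rhoFun F a := by
      apply LinearMap.ext; intro v
      rw [rhoFun_apply, rhoFun_apply, ← hact]
    have hρe1 : (rhoFun F e : Module.End F (↥Msub ⧸ Ssub)) = 1 := by
      apply LinearMap.ext; intro v
      rw [rhoFun_apply, hid, Module.End.one_apply]
    rcases corner_dichotomy (F := F) e he hprim (e * a * e) hrr with
      ⟨b, hbR, hab, hba⟩ | ⟨b, hbR, hab, hba⟩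
    · left
      refine ⟨b, ?_, ?_⟩
      · rw [← hρae, ← rhoFun_mul, hba, hρe1]
      · rw [← hρae, ← rhoFun_mul, hab, hρe1]
    · right
      refine ⟨b, ?_, ?_⟩
      · rw [← hρae, ← hρe1, ← map_sub, ← rhoFun_mul, hba, hρe1]
      · rw [← hρae, ← hρe1, ← map_sub, ← rhoFun_mul, hab, hρe1]
  haveI := hnonzero
  exact abstract_dim_one v₀ hcyc hdich hzad
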